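/- Let T' and S' be rooted binary trees on the same leaf set X with identical left-to-right leaf orderings, |X| = N. Suppose some leaf x and leaf subset Y ⊆ X satisfy: lca_{T'}(Y) is a strict descendant of lca_{T'}(Y ∪ {x}) and lca_{S'}(Y) is a strict descendant of lca_{S'}(Y ∪ {x}). Then for any A ⊆ Y with T'|A = S'|A, the set A ∪ {x} also satisfies T'|(A ∪ {x}) = S'|(A ∪ {x}), and if T'|A is a caterpillar then so is T'|(A ∪ {x}). -/

import Mathlib

/-- Rooted binary trees with leaves labeled by `X` (with designated left/right children). -/
inductive BTree (X : Type) where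
  | leaf : X → BTree X
  | node : BTree X → BTree X → BTree X

namespace BTree

variable {X : Type} [DecidableEq X]

/-- Left-to-right (pre-order) leaf sequence. -/
def seq : BTree X → List X
  | leaf x => [x]
  | node l r => seq l ++ seq r

/-- Leaf set. -/
def leaves (t : BTree X) : Finset X := t.seq.toFinset

/-- Number of leaves. -/
def size (t : BTree X) : ℕ := t.seq.length

/-- A phylogenetic tree: leaves are bijectively labeled (no repeated labels). -/
def Phylo (t : BTree X) : Prop := t.seq.Nodup

def isLeaf : BTree X → Prop
  | leaf _ => True
  | node _ _ => False

/-- A rooted caterpillar: every internal node (including the root) has a leaf child. -/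
def isCaterpillar : BTree X → Prop
  | leaf _ => True
  | node l r => (isLeaf l ∧ isCaterpillar r) ∨ (isLeaf r ∧ isCaterpillar l)

/-- A perfectly balanced binary tree. -/
def isPerfect : BTree X → Prop
  | leaf _ => True
  | node l r => isPerfect l ∧ isPerfect r ∧ size l = size r

/-- Restriction `T|A`: minimal subtree spanning the leaves in `A`, with degree-two
vertices suppressed; `none` if `A` contains no leaf of the tree. -/
def restrict : BTree X → Finset X → Option (BTree X)
  | leaf x, A => if x ∈ A then some (leaf x) else none
  | node l r, A =>
    match restrict l A, restrict r A with
    | some l', some r' => some (node l' r')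
    | some l', none => some l'
    | none, some r' => some r'
    | none, none => none

/-- Nodes of a tree are addressed by root-paths: `false` = go left, `true` = go right.
`subtreeAt t p` is the subtree rooted at the node with address `p` (if it exists). -/
def subtreeAt : BTree X → List Bool → Option (BTree X)
  | t, [] => some t
  | leaf _, _ :: _ => none
  | node l _, false :: p => subtreeAt l p
  | node _ r, true :: p => subtreeAt r p

/-- Address of the least common ancestor of a set of leaves. -/
def lcaPos : BTree X → Finset X → List Bool
  | leaf _, _ => []
  | node l r, A =>
    if A ⊆ l.leaves then false :: lcaPos l A
    else if A ⊆ r.leaves then true :: lcaPos r A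
    else []

/-- `v ⪯ u` in the ancestor order iff the address of `u` is a prefix of the address of `v`.
Two nodes are incomparable if neither address is a prefix of the other. -/
def Incomp (p q : List Bool) : Prop := ¬ p <+: q ∧ ¬ q <+: p

/-- `StrictBelow p q`: the node at address `p` is a strict descendant of the node at `q`. -/
def StrictBelow (p q : List Bool) : Prop := q <+: p ∧ p ≠ q

/-- Identity of rooted phylogenetic trees: label-preserving graph isomorphism
(the left/right designation is irrelevant). -/
def REq : BTree X → BTree X → Prop
  | leaf x, leaf y => x = y
  | node l r, node l' r' => (REq l l' ∧ REq r r') ∨ (REq l r' ∧ REq r l')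
  | _, _ => False

/-- The splits (edge-induced leaf bipartitions, each recorded by both of its sides)
of the unrooted tree obtained by de-rooting `t`. -/
def usplits (t : BTree X) : Set (Finset X) :=
  { A | ∃ p u, t.subtreeAt p = some u ∧ (A = u.leaves ∨ A = t.leaves \ u.leaves) }

/-- `t` and `s` de-root to identical unrooted phylogenetic trees. -/
def UEq (t s : BTree X) : Prop := t.leaves = s.leaves ∧ usplits t = usplits s

/-- Rooted agreement of `t` and `s` on leaf set `A`: `t|A = s|A` as rooted trees. -/
def RAgree (t s : BTree X) (A : Finset X) : Prop :=
  ∃ t' s', t.restrict A = some t' ∧ s.restrict A = some s' ∧ REq t' s'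

/-- Unrooted agreement of (the de-rootings of) `t` and `s` on leaf set `A`. -/
def UAgree (t s : BTree X) (A : Finset X) : Prop :=
  ∃ t' s', t.restrict A = some t' ∧ s.restrict A = some s' ∧ UEq t' s'

/-- `t` de-roots to an unrooted caterpillar. -/
def UCaterpillar (t : BTree X) : Prop := ∃ c : BTree X, isCaterpillar c ∧ UEq c t

/-- The subtrees hanging off the path from the left-most leaf to the root
(`Q_1, …, Q_k` in the paper; `Q_1` is the left-most leaf itself). -/
def leftSpine : BTree X → List (BTree X)
  | leaf x => [leaf x]
  | node l r => leftSpine l ++ [r]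

/-- The subtrees hanging off the path from the root to the right-most leaf
(`R_1, …, R_m` in the paper; `R_m` is the right-most leaf itself). -/
def rightSpine : BTree X → List (BTree X)
  | leaf x => [leaf x]
  | node l r => l :: rightSpine r

/-- Graph distance (number of edges) between leaves `x` and `y` in the unrooted
tree obtained by de-rooting `t` (the suppressed root accounts for the `-1`). -/
def udist (t : BTree X) (x y : X) : ℕ :=
  (lcaPos t {x}).length - (lcaPos t {x, y}).length +
    ((lcaPos t {y}).length - (lcaPos t {x, y}).length) -
    (if lcaPos t {x, y} = [] then 1 else 0)

lemma mem_leaves' {t : BTree X} {y : X} : y ∈ t.leaves ↔ y ∈ t.seq := List.mem_toFinset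

lemma mem_leaves_node' {l r : BTree X} {y : X} :
    y ∈ (node l r).leaves ↔ y ∈ l.leaves ∨ y ∈ r.leaves := by
  simp [leaves, seq]

lemma phylo_node' {l r : BTree X} (h : (node l r).Phylo) :
    l.Phylo ∧ r.Phylo ∧ ∀ y ∈ l.leaves, y ∉ r.leaves := by
  have h' : (l.seq ++ r.seq).Nodup := h
  refine ⟨h'.of_append_left, h'.of_append_right, ?_⟩
  intro y hy hyr
  exact (List.disjoint_of_nodup_append h') (mem_leaves'.mp hy) (mem_leaves'.mp hyr)

lemma restrict_congr' : ∀ (u : BTree X) {S S' : Finset X},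
    (∀ y ∈ u.leaves, (y ∈ S ↔ y ∈ S')) → u.restrict S = u.restrict S'
  | leaf y, S, S', h => by
      have hy := h y (by simp [leaves, seq])
      simp only [restrict]
      rw [if_congr hy rfl rfl]
  | node l r, S, S', h => by
      have hl := restrict_congr' l (fun y hy => h y (mem_leaves_node'.mpr (Or.inl hy)))
      have hr := restrict_congr' r (fun y hy => h y (mem_leaves_node'.mpr (Or.inr hy)))
      simp only [restrict, hl, hr]

lemma restrict_eq_none' : ∀ (u : BTree X) {S : Finset X},
    (∀ y ∈ u.leaves, y ∉ S) → u.restrict S = none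
  | leaf y, S, h => by
      have := h y (by simp [leaves, seq])
      simp [restrict, this]
  | node l r, S, h => by
      have hl := restrict_eq_none' l (fun y hy => h y (mem_leaves_node'.mpr (Or.inl hy)))
      have hr := restrict_eq_none' r (fun y hy => h y (mem_leaves_node'.mpr (Or.inr hy)))
      simp [restrict, hl, hr]

lemma restrict_singleton' : ∀ (u : BTree X) {x : X},
    u.Phylo → x ∈ u.leaves → u.restrict {x} = some (leaf x)
  | leaf y, x, _, hx => by
      have : x = y := by simpa [leaves, seq] using hx
      subst this
      simp [restrict]
  | node l r, x, hp, hx => by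
      obtain ⟨hpl, hpr, hdisj⟩ := phylo_node' hp
      rcases mem_leaves_node'.mp hx with hxl | hxr
      · have h1 := restrict_singleton' l hpl hxl
        have h2 : r.restrict {x} = none := by
          refine restrict_eq_none' r (fun y hy hyS => ?_)
          have : y = x := by simpa using hyS
          exact hdisj y (this ▸ hxl) hy
        simp [restrict, h1, h2]
      · have h1 : l.restrict {x} = none := by
          refine restrict_eq_none' l (fun y hy hyS => ?_)
          have : y = x := by simpa using hyS
          exact hdisj y hy (this ▸ hxr)
        have h2 := restrict_singleton' r hpr hxr
        simp [restrict, h1, h2]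

lemma restrict_some_nonempty' : ∀ (u : BTree X) {S : Finset X} {v : BTree X},
    u.restrict S = some v → ∃ a, a ∈ S ∧ a ∈ u.leaves := by
  intro u S v h
  by_contra hc
  push_neg at hc
  have : u.restrict S = none := restrict_eq_none' u (fun y hy hyS => hc y hyS hy)
  rw [this] at h
  cases h

lemma strictBelow_cons {b : Bool} {p q : List Bool} :
    StrictBelow (b :: p) (b :: q) ↔ StrictBelow p q := by
  unfold StrictBelow
  simp [List.cons_prefix_cons]

lemma lca_mono' : ∀ (t : BTree X) {A Y : Finset X} {x : X},
    t.Phylo → x ∈ t.leaves → A ⊆ Y → A.Nonempty →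
    StrictBelow (lcaPos t Y) (lcaPos t (insert x Y)) →
    StrictBelow (lcaPos t A) (lcaPos t (insert x A))
  | leaf y, A, Y, x, _, _, _, _, hT => by
      exact absurd rfl hT.2
  | node l r, A, Y, x, hp, hx, hAY, hAne, hT => by
      obtain ⟨hpl, hpr, hdisj⟩ := phylo_node' hp
      obtain ⟨a, haA⟩ := id hAne
      by_cases h1 : insert x Y ⊆ l.leaves
      · -- everything goes left
        have hxl : x ∈ l.leaves := h1 (Finset.mem_insert_self x Y)
        have hYl : Y ⊆ l.leaves := fun y hy => h1 (Finset.mem_insert_of_mem hy)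
        have hAl : A ⊆ l.leaves := hAY.trans hYl
        have hxAl : insert x A ⊆ l.leaves := Finset.insert_subset hxl hAl
        rw [show lcaPos (node l r) Y = false :: lcaPos l Y by simp [lcaPos, hYl],
            show lcaPos (node l r) (insert x Y) = false :: lcaPos l (insert x Y) by
              simp [lcaPos, h1]] at hT
        rw [show lcaPos (node l r) A = false :: lcaPos l A by simp [lcaPos, hAl],
            show lcaPos (node l r) (insert x A) = false :: lcaPos l (insert x A) by
              simp [lcaPos, hxAl]]
        exact strictBelow_cons.mpr
          (lca_mono' l hpl hxl hAY hAne (strictBelow_cons.mp hT))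
      · by_cases h2 : insert x Y ⊆ r.leaves
        · -- everything goes right
          have hxr : x ∈ r.leaves := h2 (Finset.mem_insert_self x Y)
          have hYr : Y ⊆ r.leaves := fun y hy => h2 (Finset.mem_insert_of_mem hy)
          have hAr : A ⊆ r.leaves := hAY.trans hYr
          have har : a ∈ r.leaves := hAr haA
          have hYnl : ¬ Y ⊆ l.leaves := fun h => hdisj a (h (hAY haA)) har
          have hAnl : ¬ A ⊆ l.leaves := fun h => hdisj a (h haA) har
          have hxAr : insert x A ⊆ r.leaves := Finset.insert_subset hxr hAr
          have hxAnl : ¬ insert x A ⊆ l.leaves :=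
            fun h => hdisj a (h (Finset.mem_insert_of_mem haA)) har
          rw [show lcaPos (node l r) Y = true :: lcaPos r Y by simp [lcaPos, hYnl, hYr],
              show lcaPos (node l r) (insert x Y) = true :: lcaPos r (insert x Y) by
                simp [lcaPos, h1, h2]] at hT
          rw [show lcaPos (node l r) A = true :: lcaPos r A by simp [lcaPos, hAnl, hAr],
              show lcaPos (node l r) (insert x A) = true :: lcaPos r (insert x A) by
                simp [lcaPos, hxAnl, hxAr]]
          exact strictBelow_cons.mpr
            (lca_mono' r hpr hxr hAY hAne (strictBelow_cons.mp hT))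
        · -- insert x Y splits across the root
          have hlca : lcaPos (node l r) (insert x Y) = [] := by simp [lcaPos, h1, h2]
          rw [hlca] at hT
          by_cases hYl : Y ⊆ l.leaves
          · -- Y left, x right
            have hAl : A ⊆ l.leaves := hAY.trans hYl
            have hxnl : x ∉ l.leaves := fun hxl => h1 (Finset.insert_subset hxl hYl)
            have hxr : x ∈ r.leaves := (mem_leaves_node'.mp hx).resolve_left hxnl
            have hal : a ∈ l.leaves := hAl haA
            have hxAnl : ¬ insert x A ⊆ l.leaves :=
              fun h => hxnl (h (Finset.mem_insert_self x A))
            have hxAnr : ¬ insert x A ⊆ r.leaves :=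
              fun h => hdisj a hal (h (Finset.mem_insert_of_mem haA))
            rw [show lcaPos (node l r) A = false :: lcaPos l A by simp [lcaPos, hAl],
                show lcaPos (node l r) (insert x A) = [] by simp [lcaPos, hxAnl, hxAnr]]
            exact ⟨List.nil_prefix, by simp⟩
          · -- Y right, x left
            have hYr : Y ⊆ r.leaves := by
              by_contra hYnr
              exact hT.2 (by simp [lcaPos, hYl, hYnr])
            have hAr : A ⊆ r.leaves := hAY.trans hYr
            have hxnr : x ∉ r.leaves := fun hxr => h2 (Finset.insert_subset hxr hYr)
            have har : a ∈ r.leaves := hAr haA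
            have hAnl : ¬ A ⊆ l.leaves := fun h => hdisj a (h haA) har
            have hxAnl : ¬ insert x A ⊆ l.leaves :=
              fun h => hdisj a (h (Finset.mem_insert_of_mem haA)) har
            have hxAnr : ¬ insert x A ⊆ r.leaves :=
              fun h => hxnr (h (Finset.mem_insert_self x A))
            rw [show lcaPos (node l r) A = true :: lcaPos r A by simp [lcaPos, hAnl, hAr],
                show lcaPos (node l r) (insert x A) = [] by simp [lcaPos, hxAnl, hxAnr]]
            exact ⟨List.nil_prefix, by simp⟩

lemma restrict_node_left' {l r : BTree X} {A : Finset X} (h : r.restrict A = none) :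
    (node l r).restrict A = l.restrict A := by
  rcases hl : l.restrict A with _ | v <;> simp [restrict, h, hl]

lemma restrict_node_right' {l r : BTree X} {A : Finset X} (h : l.restrict A = none) :
    (node l r).restrict A = r.restrict A := by
  rcases hr : r.restrict A with _ | v <;> simp [restrict, h, hr]

lemma restrict_insert_key : ∀ (t : BTree X) {A : Finset X} {ta : BTree X} {x : X},
    t.Phylo → t.restrict A = some ta → x ∈ t.leaves →
    StrictBelow (lcaPos t A) (lcaPos t (insert x A)) →
    t.restrict (insert x A) = some (node ta (leaf x)) ∨
    t.restrict (insert x A) = some (node (leaf x) ta)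
  | leaf y, A, ta, x, _, _, _, hSB => by
      exact absurd rfl hSB.2
  | node l r, A, ta, x, hp, hta, hx, hSB => by
      obtain ⟨hpl, hpr, hdisj⟩ := phylo_node' hp
      obtain ⟨a, haA, hat⟩ := restrict_some_nonempty' _ hta
      by_cases h1 : insert x A ⊆ l.leaves
      · -- recurse left
        have hxl : x ∈ l.leaves := h1 (Finset.mem_insert_self x A)
        have hAl : A ⊆ l.leaves := fun y hy => h1 (Finset.mem_insert_of_mem hy)
        have hrA : r.restrict A = none :=
          restrict_eq_none' r (fun y hy hyS => hdisj y (hAl hyS) hy)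
        have hrxA : r.restrict (insert x A) = none :=
          restrict_eq_none' r (fun y hy hyS => hdisj y (h1 hyS) hy)
        have hlA : l.restrict A = some ta := by
          rw [← restrict_node_left' hrA]; exact hta
        rw [show lcaPos (node l r) A = false :: lcaPos l A by simp [lcaPos, hAl],
            show lcaPos (node l r) (insert x A) = false :: lcaPos l (insert x A) by
              simp [lcaPos, h1]] at hSB
        have := restrict_insert_key l hpl hlA hxl (strictBelow_cons.mp hSB)
        rcases this with h | h
        · left; rw [restrict_node_left' hrxA]; exact h
        · right; rw [restrict_node_left' hrxA]; exact h
      · by_cases h2 : insert x A ⊆ r.leaves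
        · -- recurse right
          have hxr : x ∈ r.leaves := h2 (Finset.mem_insert_self x A)
          have hAr : A ⊆ r.leaves := fun y hy => h2 (Finset.mem_insert_of_mem hy)
          have har : a ∈ r.leaves := hAr haA
          have hAnl : ¬ A ⊆ l.leaves := fun h => hdisj a (h haA) har
          have hlA : l.restrict A = none :=
            restrict_eq_none' l (fun y hy hyS => hdisj y hy (hAr hyS))
          have hlxA : l.restrict (insert x A) = none :=
            restrict_eq_none' l (fun y hy hyS => hdisj y hy (h2 hyS))
          have hrA : r.restrict A = some ta := by
            rw [← restrict_node_right' hlA]; exact hta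
          rw [show lcaPos (node l r) A = true :: lcaPos r A by simp [lcaPos, hAnl, hAr],
              show lcaPos (node l r) (insert x A) = true :: lcaPos r (insert x A) by
                simp [lcaPos, h1, h2]] at hSB
          have := restrict_insert_key r hpr hrA hxr (strictBelow_cons.mp hSB)
          rcases this with h | h
          · left; rw [restrict_node_right' hlxA]; exact h
          · right; rw [restrict_node_right' hlxA]; exact h
        · -- x and A split at the root
          have hlca : lcaPos (node l r) (insert x A) = [] := by simp [lcaPos, h1, h2]
          rw [hlca] at hSB
          by_cases hAl : A ⊆ l.leaves
          · -- A left, x right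
            have hxnl : x ∉ l.leaves := fun hxl => h1 (Finset.insert_subset hxl hAl)
            have hxr : x ∈ r.leaves := (mem_leaves_node'.mp hx).resolve_left hxnl
            have hrA : r.restrict A = none :=
              restrict_eq_none' r (fun y hy hyS => hdisj y (hAl hyS) hy)
            have hlA : l.restrict A = some ta := by
              rw [← restrict_node_left' hrA]; exact hta
            have hlxA : l.restrict (insert x A) = some ta := by
              rw [← hlA]
              refine restrict_congr' l (fun y hy => ?_)
              simp only [Finset.mem_insert]
              constructor
              · rintro (rfl | h)
                · exact absurd hy hxnl
                · exact h
              · exact Or.inr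
            have hrxA : r.restrict (insert x A) = some (leaf x) := by
              rw [show r.restrict (insert x A) = r.restrict {x} from
                restrict_congr' r (fun y hy => by
                  simp only [Finset.mem_insert, Finset.mem_singleton]
                  constructor
                  · rintro (rfl | h)
                    · rfl
                    · exact absurd hy (hdisj y (hAl h))
                  · exact Or.inl)]
              exact restrict_singleton' r hpr hxr
            left
            simp only [restrict, hlxA, hrxA]
          · -- A right, x left
            have hAr : A ⊆ r.leaves := by
              by_contra hAnr
              exact hSB.2 (by simp [lcaPos, hAl, hAnr])
            have hxnr : x ∉ r.leaves := fun hxr => h2 (Finset.insert_subset hxr hAr)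
            have hxl : x ∈ l.leaves := (mem_leaves_node'.mp hx).resolve_right hxnr
            have hlA : l.restrict A = none :=
              restrict_eq_none' l (fun y hy hyS => hdisj y hy (hAr hyS))
            have hrA : r.restrict A = some ta := by
              rw [← restrict_node_right' hlA]; exact hta
            have hrxA : r.restrict (insert x A) = some ta := by
              rw [← hrA]
              refine restrict_congr' r (fun y hy => ?_)
              simp only [Finset.mem_insert]
              constructor
              · rintro (rfl | h)
                · exact absurd hy hxnr
                · exact h
              · exact Or.inr
            have hlxA : l.restrict (insert x A) = some (leaf x) := by
              rw [show l.restrict (insert x A) = l.restrict {x} from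
                restrict_congr' l (fun y hy => by
                  simp only [Finset.mem_insert, Finset.mem_singleton]
                  constructor
                  · rintro (rfl | h)
                    · rfl
                    · exact absurd (hAr h) (hdisj y hy)
                  · exact Or.inl)]
              exact restrict_singleton' l hpl hxl
            right
            simp only [restrict, hlxA, hrxA]

end BTree

open BTree

/-- Good-pair extension: let `t`, `s` have identical pre-order leaf sequences and
suppose the leaf `x` and leaf set `Y` satisfy, in both trees, that `lca Y` is a
strict descendant of `lca (Y ∪ {x})`.  Then whenever `A ⊆ Y` is a rooted
agreement set, so is `A ∪ {x}`; moreover adding `x` preserves the caterpillar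
shape of the agreement subtree. -/
theorem good_pair_extension {X : Type} [DecidableEq X]
    (t s : BTree X) (ht : t.Phylo) (hs : s.Phylo) (hseq : t.seq = s.seq)
    (x : X) (hx : x ∈ t.leaves) (Y : Finset X) (hY : Y ⊆ t.leaves)
    (hT : StrictBelow (lcaPos t Y) (lcaPos t (insert x Y)))
    (hS : StrictBelow (lcaPos s Y) (lcaPos s (insert x Y)))
    (A : Finset X) (hA : A ⊆ Y)
    (ta sa : BTree X)
    (hta : t.restrict A = some ta) (hsa : s.restrict A = some sa)
    (hag : REq ta sa) :
    ∃ ta' sa' : BTree X,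
      t.restrict (insert x A) = some ta' ∧ s.restrict (insert x A) = some sa' ∧
      REq ta' sa' ∧ (ta.isCaterpillar → ta'.isCaterpillar) := by
  have hls : s.leaves = t.leaves := by unfold BTree.leaves; rw [hseq]
  have hxs : x ∈ s.leaves := hls ▸ hx
  obtain ⟨a, haA, _⟩ := restrict_some_nonempty' t hta
  have hAne : A.Nonempty := ⟨a, haA⟩
  have hSBt := lca_mono' t ht hx hA hAne hT
  have hSBs := lca_mono' s hs hxs hA hAne hS
  have hkt := restrict_insert_key t ht hta hx hSBt
  have hks := restrict_insert_key s hs hsa hxs hSBs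
  have hcat : ∀ u : BTree X, isCaterpillar u → isCaterpillar (node u (leaf x)) :=
    fun u hu => Or.inr ⟨trivial, hu⟩
  have hcat' : ∀ u : BTree X, isCaterpillar u → isCaterpillar (node (leaf x) u) :=
    fun u hu => Or.inl ⟨trivial, hu⟩
  rcases hkt with h1 | h1 <;> rcases hks with h2 | h2
  · exact ⟨_, _, h1, h2, Or.inl ⟨hag, rfl⟩, hcat ta⟩
  · exact ⟨_, _, h1, h2, Or.inr ⟨hag, (rfl : x = x)⟩, hcat ta⟩
  · exact ⟨_, _, h1, h2, Or.inr ⟨(rfl : x = x), hag⟩, hcat' ta⟩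
  · exact ⟨_, _, h1, h2, Or.inl ⟨(rfl : x = x), hag⟩, hcat' ta⟩
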